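/- Let A ∈ ℝ^{N×N}, let G ∈ ℝ^{N×N} be symmetric positive definite with GᵀA + AᵀG − 2GᵀG ≺ 0, let M ∈ ℝ^{η×η} be symmetric positive definite, let l_f ≥ 0, and let ω be a real number satisfying ω ≥ (1/λmin(M))·(1 + l_f·‖M ⊗ G‖/(λmin(M)·λmin(GᵀG))). Then (M ⊗ G)((I_η ⊗ A) − ω(M ⊗ G)) + l_f·‖M ⊗ G‖·I_{Nη} ≺ 0, i.e., xᵀ[(M ⊗ G)((I_η ⊗ A) − ω(M ⊗ G)) + l_f·‖M ⊗ G‖·I_{Nη}]x < 0 for every nonzero x ∈ ℝ^{Nη}. -/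

import Mathlib

open Matrix
open scoped Kronecker

/-- Euclidean norm of a real vector. -/
noncomputable def eNorm {n : Type*} [Fintype n] (x : n → ℝ) : ℝ :=
  Real.sqrt (∑ i, x i ^ 2)

/-- Spectral (ℓ2 operator) norm of a real square matrix: the supremum of `‖Bx‖/‖x‖`. -/
noncomputable def opNorm {n : Type*} [Fintype n] (B : Matrix n n ℝ) : ℝ :=
  ⨆ x : n → ℝ, eNorm (B.mulVec x) / eNorm x

/-- Smallest real eigenvalue of a real square matrix. -/
noncomputable def lmin {n : Type*} [Fintype n] (M : Matrix n n ℝ) : ℝ :=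
  sInf {μ : ℝ | ∃ x : n → ℝ, x ≠ 0 ∧ M.mulVec x = μ • x}

/-- Largest real eigenvalue of a real square matrix. -/
noncomputable def lmax {n : Type*} [Fintype n] (M : Matrix n n ℝ) : ℝ :=
  sSup {μ : ℝ | ∃ x : n → ℝ, x ≠ 0 ∧ M.mulVec x = μ • x}

open scoped Kronecker

section Aux

variable {n : Type*} [Fintype n] [DecidableEq n]

lemma aux_qf_transpose (B : Matrix n n ℝ) (x : n → ℝ) :
    x ⬝ᵥ Bᵀ *ᵥ x = x ⬝ᵥ B *ᵥ x := by
  rw [dotProduct_mulVec, vecMul_transpose, dotProduct_comm]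

lemma aux_psd_nonneg {B : Matrix n n ℝ} (hB : B.PosSemidef) (x : n → ℝ) :
    0 ≤ x ⬝ᵥ B *ᵥ x := by simpa using hB.dotProduct_mulVec_nonneg x

lemma aux_pd_pos {B : Matrix n n ℝ} (hB : B.PosDef) {x : n → ℝ} (hx : x ≠ 0) :
    0 < x ⬝ᵥ B *ᵥ x := by simpa using hB.dotProduct_mulVec_pos hx

lemma aux_psd_add {A B : Matrix n n ℝ} (hA : A.PosSemidef) (hB : B.PosSemidef) :
    (A + B).PosSemidef := by
  refine PosSemidef.of_dotProduct_mulVec_nonneg (hA.1.add hB.1) fun x => ?_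
  have := add_nonneg (hA.dotProduct_mulVec_nonneg x) (hB.dotProduct_mulVec_nonneg x)
  simpa [add_mulVec, dotProduct_add] using this

lemma aux_eig_mem {A : Matrix n n ℝ} (hA : A.IsHermitian) {μ : ℝ} {x : n → ℝ}
    (hx : x ≠ 0) (hAx : A *ᵥ x = μ • x) : ∃ i, hA.eigenvalues i = μ := by
  set U : Matrix n n ℝ := (hA.eigenvectorUnitary : Matrix n n ℝ) with hU
  have hspec := hA.spectral_theorem
  rw [RCLike.ofReal_real_eq_id, Function.id_comp, Unitary.conjStarAlgAut_apply] at hspec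
  set y : n → ℝ := star U *ᵥ x with hy
  have hUy : U *ᵥ y = x := by
    rw [hy, mulVec_mulVec, Unitary.mul_star_self_of_mem hA.eigenvectorUnitary.2, one_mulVec]
  have hy0 : y ≠ 0 := fun h => hx (by rw [← hUy, h, mulVec_zero])
  have h1 : star U * A = diagonal hA.eigenvalues * star U := by
    conv_lhs => rw [hspec]
    rw [← mul_assoc, ← mul_assoc, Unitary.star_mul_self_of_mem hA.eigenvectorUnitary.2, one_mul]
  have h2 : diagonal hA.eigenvalues *ᵥ y = μ • y := by
    have h3 := congrArg (fun v => star U *ᵥ v) hAx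
    simp only [mulVec_mulVec, h1, mulVec_smul] at h3
    rw [← mulVec_mulVec] at h3
    exact h3
  obtain ⟨j, hj⟩ := Function.ne_iff.mp hy0
  refine ⟨j, ?_⟩
  have h4 := congrFun h2 j
  simp [mulVec_diagonal] at h4
  exact h4.resolve_right hj

lemma aux_eigSet {A : Matrix n n ℝ} (hA : A.IsHermitian) :
    {μ : ℝ | ∃ x : n → ℝ, x ≠ 0 ∧ A *ᵥ x = μ • x} = Set.range hA.eigenvalues := by
  ext μ
  constructor
  · rintro ⟨x, hx, hAx⟩
    exact aux_eig_mem hA hx hAx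
  · rintro ⟨i, rfl⟩
    refine ⟨hA.eigenvectorBasis i, ?_, hA.mulVec_eigenvectorBasis i⟩
    have := hA.eigenvectorBasis.orthonormal.ne_zero i
    intro h
    apply this
    ext j
    exact congrFun h j

lemma aux_lmin_le {A : Matrix n n ℝ} (hA : A.IsHermitian) (i : n) :
    lmin A ≤ hA.eigenvalues i := by
  rw [lmin, aux_eigSet hA]
  exact csInf_le (Set.finite_range _).bddBelow ⟨i, rfl⟩

lemma aux_lmin_pos [Nonempty n] {A : Matrix n n ℝ} (hA : A.PosDef) : 0 < lmin A := by
  have hmem : lmin A ∈ Set.range hA.1.eigenvalues := by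
    rw [lmin, aux_eigSet hA.1]
    exact (Set.range_nonempty _).csInf_mem (Set.finite_range _)
  obtain ⟨i, hi⟩ := hmem
  rw [← hi]
  exact hA.eigenvalues_pos i

end Aux
set_option linter.unusedSectionVars false

section Aux2
variable {n : Type*} [Fintype n] [DecidableEq n]

lemma aux_psd_smul {B : Matrix n n ℝ} (hB : B.PosSemidef) {c : ℝ} (hc : 0 ≤ c) :
    (c • B).PosSemidef := by
  have hherm : (c • B).IsHermitian := by
    rw [Matrix.IsHermitian, conjTranspose_smul, star_trivial, hB.1]
  refine PosSemidef.of_dotProduct_mulVec_nonneg hherm fun x => ?_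
  have := mul_nonneg hc (hB.dotProduct_mulVec_nonneg x)
  simpa [smul_mulVec, dotProduct_smul] using this

lemma aux_conj_psd {U : Matrix n n ℝ} (hU : U ∈ Matrix.unitaryGroup n ℝ) {d : n → ℝ}
    (hd : ∀ i, 0 ≤ d i) : (U * diagonal d * star U).PosSemidef := by
  rw [Matrix.star_eq_conjTranspose]
  exact (Matrix.PosSemidef.diagonal (by intro i; simpa using hd i)).mul_mul_conjTranspose_same U

lemma aux_herm_sub_smul {A : Matrix n n ℝ} (hA : A.IsHermitian) {c : ℝ}
    (hc : ∀ i, c ≤ hA.eigenvalues i) : (A - c • 1).PosSemidef := by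
  have hspec := hA.spectral_theorem
  rw [RCLike.ofReal_real_eq_id, Function.id_comp, Unitary.conjStarAlgAut_apply] at hspec
  have hUU : (hA.eigenvectorUnitary : Matrix n n ℝ) * star (hA.eigenvectorUnitary : Matrix n n ℝ)
      = 1 := Unitary.mul_star_self_of_mem hA.eigenvectorUnitary.2
  have heq : A - c • 1 = (hA.eigenvectorUnitary : Matrix n n ℝ)
      * diagonal (fun i => hA.eigenvalues i - c) * star (hA.eigenvectorUnitary : Matrix n n ℝ) := by
    have h1 : (diagonal (fun i => hA.eigenvalues i - c) : Matrix n n ℝ)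
        = diagonal hA.eigenvalues - c • 1 := by
      rw [smul_one_eq_diagonal, diagonal_sub]
    rw [h1, Matrix.mul_sub, Matrix.sub_mul, ← hspec, Matrix.mul_smul, Matrix.mul_one,
      Matrix.smul_mul, hUU]
  rw [heq]
  exact aux_conj_psd hA.eigenvectorUnitary.2 fun i => sub_nonneg.mpr (hc i)

lemma aux_sq_sub_smul {A : Matrix n n ℝ} (hA : A.IsHermitian) {c : ℝ} (hc0 : 0 ≤ c)
    (hc : ∀ i, c ≤ hA.eigenvalues i) : (A * A - c • A).PosSemidef := by
  have hspec := hA.spectral_theorem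
  rw [RCLike.ofReal_real_eq_id, Function.id_comp, Unitary.conjStarAlgAut_apply] at hspec
  set V := (hA.eigenvectorUnitary : Matrix n n ℝ) with hV
  have hsU : star V * V = 1 := Unitary.star_mul_self_of_mem hA.eigenvectorUnitary.2
  have heq : A * A - c • A = V
      * diagonal (fun i => hA.eigenvalues i * hA.eigenvalues i - c * hA.eigenvalues i)
      * star V := by
    have h1 : (diagonal (fun i => hA.eigenvalues i * hA.eigenvalues i - c * hA.eigenvalues i)
        : Matrix n n ℝ) = diagonal hA.eigenvalues * diagonal hA.eigenvalues
          - c • diagonal hA.eigenvalues := by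
      rw [diagonal_mul_diagonal, ← diagonal_smul, diagonal_sub]
      rfl
    rw [h1, Matrix.mul_sub, Matrix.sub_mul]
    congr 1
    · have hmid : star V * (V * (diagonal hA.eigenvalues * star V))
          = diagonal hA.eigenvalues * star V := by
        rw [← Matrix.mul_assoc, hsU, Matrix.one_mul]
      conv_lhs => rw [hspec]
      simp only [Matrix.mul_assoc]
      rw [hmid]
    · conv_lhs => rw [hspec]
      rw [Matrix.mul_smul, Matrix.smul_mul]
  rw [heq]
  refine aux_conj_psd hA.eigenvectorUnitary.2 fun i => ?_
  nlinarith [hc i]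

end Aux2

section Aux3
variable {m n : Type*} [Fintype m] [Fintype n] [DecidableEq m] [DecidableEq n]

lemma aux_opNorm_nonneg (B : Matrix n n ℝ) : 0 ≤ opNorm B :=
  Real.iSup_nonneg fun x => div_nonneg (Real.sqrt_nonneg _) (Real.sqrt_nonneg _)

lemma aux_kron_conjT (P : Matrix m m ℝ) (Q : Matrix n n ℝ) :
    (P ⊗ₖ Q)ᴴ = Pᴴ ⊗ₖ Qᴴ := by
  rw [conjTranspose_eq_transpose_of_trivial, conjTranspose_eq_transpose_of_trivial,
    conjTranspose_eq_transpose_of_trivial, kroneckerMap_transpose]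

lemma aux_psd_kron {P : Matrix m m ℝ} {Q : Matrix n n ℝ}
    (hP : P.PosSemidef) (hQ : Q.PosSemidef) : (P ⊗ₖ Q).PosSemidef := by
  exact hP.kronecker hQ

lemma aux_dot_self_pos {x : n → ℝ} (hx : x ≠ 0) : 0 < x ⬝ᵥ x := by
  have hnn : 0 ≤ x ⬝ᵥ x := Finset.sum_nonneg fun i _ => mul_self_nonneg (x i)
  rcases lt_or_eq_of_le hnn with h | h
  · exact h
  · exact absurd (dotProduct_self_eq_zero.mp h.symm) hx

lemma aux_pd_kron {P : Matrix m m ℝ} {Q : Matrix n n ℝ}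
    (hP : P.PosDef) (hQ : Q.PosDef) : (P ⊗ₖ Q).PosDef := by
  exact hP.kronecker hQ

lemma aux_kron_sub (A : Matrix m m ℝ) (B C : Matrix n n ℝ) :
    A ⊗ₖ (B - C) = A ⊗ₖ B - A ⊗ₖ C := by
  ext ⟨i, j⟩ ⟨k, l⟩
  simp [Matrix.kroneckerMap_apply, Matrix.sub_apply, mul_sub]

lemma aux_sub_kron (A B : Matrix m m ℝ) (C : Matrix n n ℝ) :
    (A - B) ⊗ₖ C = A ⊗ₖ C - B ⊗ₖ C := by
  ext ⟨i, j⟩ ⟨k, l⟩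
  simp [Matrix.kroneckerMap_apply, Matrix.sub_apply, sub_mul]

end Aux3
theorem stmt5 {N η : ℕ} (A G : Matrix (Fin N) (Fin N) ℝ)
    (hG : G.PosDef)
    (hGA : ∀ x : Fin N → ℝ, x ≠ 0 →
      x ⬝ᵥ (Gᵀ * A + Aᵀ * G - (2 : ℝ) • (Gᵀ * G)).mulVec x < 0)
    (M : Matrix (Fin η) (Fin η) ℝ) (hM : M.PosDef)
    (lf : ℝ) (hlf : 0 ≤ lf) (ω : ℝ)
    (hω : (1 / lmin M) * (1 + lf * opNorm (M ⊗ₖ G) / (lmin M * lmin (Gᵀ * G))) ≤ ω) :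
    ∀ x : Fin η × Fin N → ℝ, x ≠ 0 →
      x ⬝ᵥ ((M ⊗ₖ G) * (((1 : Matrix (Fin η) (Fin η) ℝ) ⊗ₖ A) - ω • (M ⊗ₖ G))
            + (lf * opNorm (M ⊗ₖ G)) • (1 : Matrix (Fin η × Fin N) (Fin η × Fin N) ℝ)).mulVec x
        < 0 := by
  intro x hx
  rcases isEmpty_or_nonempty (Fin η × Fin N) with hE | hNE
  · exact absurd (Subsingleton.elim x 0) hx
  haveI : Nonempty (Fin η) := Nonempty.map Prod.fst hNE
  haveI : Nonempty (Fin N) := Nonempty.map Prod.snd hNE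
  have hGT : Gᵀ = G := by
    rw [← conjTranspose_eq_transpose_of_trivial]; exact hG.1
  have hMTt : Mᵀ = M := by
    rw [← conjTranspose_eq_transpose_of_trivial]; exact hM.1
  rw [hGT] at hGA hω
  set c : ℝ := lf * opNorm (M ⊗ₖ G) with hc
  have hc0 : 0 ≤ c := mul_nonneg hlf (aux_opNorm_nonneg _)
  set mm : ℝ := lmin M with hmm
  set g : ℝ := lmin (G * G) with hgdef
  -- G * G is positive definite
  have hGG : (G * G).PosDef := by
    have hherm : (G * G).IsHermitian := by
      rw [Matrix.IsHermitian, conjTranspose_mul, hG.1]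
    refine PosDef.of_dotProduct_mulVec_pos hherm fun y hy => ?_
    have hyG : G *ᵥ y ≠ 0 := by
      intro h
      have hunit : IsUnit G.det := (ne_of_gt hG.det_pos).isUnit
      have := congrArg (fun v => G⁻¹ *ᵥ v) h
      simp only [mulVec_mulVec, Matrix.nonsing_inv_mul _ hunit, one_mulVec, mulVec_zero] at this
      exact hy this
    have hq : y ⬝ᵥ (G * G) *ᵥ y = (G *ᵥ y) ⬝ᵥ (G *ᵥ y) := by
      have hvm : y ᵥ* G = G *ᵥ y := by
        conv_lhs => rw [← hGT]
        rw [vecMul_transpose]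
      rw [← mulVec_mulVec, dotProduct_mulVec, hvm]
    simpa [star_trivial, hq] using aux_dot_self_pos hyG
  have hm : 0 < mm := aux_lmin_pos hM
  have hg0 : 0 < g := aux_lmin_pos hGG
  have hMeig : ∀ i, mm ≤ hM.1.eigenvalues i := fun i => aux_lmin_le hM.1 i
  have hGGeig : ∀ i, g ≤ hGG.1.eigenvalues i := fun i => aux_lmin_le hGG.1 i
  -- T := 2•(G*G) - (G*A + Aᵀ*G) is positive definite
  set T : Matrix (Fin N) (Fin N) ℝ := (2:ℝ) • (G * G) - (G * A + Aᵀ * G) with hT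
  have hTpd : T.PosDef := by
    have hherm : T.IsHermitian := by
      rw [Matrix.IsHermitian, conjTranspose_eq_transpose_of_trivial, hT]
      simp only [Matrix.transpose_sub, Matrix.transpose_smul, Matrix.transpose_add,
        Matrix.transpose_mul, Matrix.transpose_transpose, hGT]
      abel
    refine PosDef.of_dotProduct_mulVec_pos hherm fun y hy => ?_
    have h1 := hGA y hy
    have hTneg : T = -(G * A + Aᵀ * G - (2:ℝ) • (G * G)) := by rw [hT]; abel
    simp only [star_trivial, hTneg, Matrix.neg_mulVec, dotProduct_neg]
    linarith
  -- quadratic-form quantities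
  set q1 : ℝ := x ⬝ᵥ (M ⊗ₖ (G * A)) *ᵥ x with hq1
  set q2 : ℝ := x ⬝ᵥ (M ⊗ₖ (G * G)) *ᵥ x with hq2
  set q3 : ℝ := x ⬝ᵥ ((M * M) ⊗ₖ (G * G)) *ᵥ x with hq3
  set s : ℝ := x ⬝ᵥ x with hs
  -- expand the goal matrix
  have hmat : (M ⊗ₖ G) * ((1 : Matrix (Fin η) (Fin η) ℝ) ⊗ₖ A - ω • (M ⊗ₖ G))
      + c • (1 : Matrix (Fin η × Fin N) (Fin η × Fin N) ℝ)
      = M ⊗ₖ (G * A) - ω • ((M * M) ⊗ₖ (G * G))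
        + c • (1 : Matrix (Fin η × Fin N) (Fin η × Fin N) ℝ) := by
    rw [Matrix.mul_sub, Matrix.mul_smul, ← Matrix.mul_kronecker_mul,
      ← Matrix.mul_kronecker_mul, Matrix.mul_one]
  have hexpand : x ⬝ᵥ ((M ⊗ₖ G) * ((1 : Matrix (Fin η) (Fin η) ℝ) ⊗ₖ A - ω • (M ⊗ₖ G))
      + c • (1 : Matrix (Fin η × Fin N) (Fin η × Fin N) ℝ)) *ᵥ x
      = q1 - ω * q3 + c * s := by
    rw [hmat]
    simp [add_mulVec, sub_mulVec, smul_mulVec, one_mulVec, dotProduct_add,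
      dotProduct_sub, dotProduct_smul, smul_eq_mul, hq1, hq3, hs]
  rw [hexpand]
  -- step 1 : q1 < q2
  have hMTq : 0 < x ⬝ᵥ (M ⊗ₖ T) *ᵥ x := aux_pd_pos (aux_pd_kron hM hTpd) hx
  have hMT2 : M ⊗ₖ T = (2:ℝ) • (M ⊗ₖ (G * G)) - M ⊗ₖ (G * A) - M ⊗ₖ (Aᵀ * G) := by
    rw [hT, aux_kron_sub, kronecker_add, kronecker_smul]
    abel
  have htr : M ⊗ₖ (Aᵀ * G) = (M ⊗ₖ (G * A))ᵀ := by
    rw [← kroneckerMap_transpose, hMTt, Matrix.transpose_mul, hGT]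
  have hq1' : x ⬝ᵥ (M ⊗ₖ (Aᵀ * G)) *ᵥ x = q1 := by
    rw [htr, aux_qf_transpose]
  have h1 : q1 < q2 := by
    rw [hMT2] at hMTq
    simp only [sub_mulVec, smul_mulVec, dotProduct_sub, dotProduct_smul,
      smul_eq_mul] at hMTq
    rw [hq1'] at hMTq
    rw [hq1, hq2]
    linarith
  -- step 2 : mm * q2 ≤ q3
  have h2 : mm * q2 ≤ q3 := by
    have hpsd := aux_psd_nonneg (aux_psd_kron (aux_sq_sub_smul hM.1 hm.le hMeig)
      hGG.posSemidef) x
    rw [aux_sub_kron, smul_kronecker] at hpsd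
    simp only [sub_mulVec, smul_mulVec, dotProduct_sub, dotProduct_smul,
      smul_eq_mul] at hpsd
    rw [hq2, hq3]
    linarith
  -- step 3 : mm * g * s ≤ q2
  have h3 : mm * g * s ≤ q2 := by
    have heq : M ⊗ₖ (G * G) - (mm * g) • (1 : Matrix (Fin η × Fin N) (Fin η × Fin N) ℝ)
        = (M - mm • 1) ⊗ₖ (G * G) + (mm • (1 : Matrix (Fin η) (Fin η) ℝ)) ⊗ₖ (G * G - g • 1) := by
      rw [aux_sub_kron, aux_kron_sub, smul_kronecker, smul_kronecker, kronecker_smul,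
        one_kronecker_one]
      module
    have hpsd := aux_psd_nonneg (aux_psd_add
      (aux_psd_kron (aux_herm_sub_smul hM.1 hMeig) hGG.posSemidef)
      (aux_psd_kron (aux_psd_smul Matrix.PosDef.one.posSemidef hm.le)
        (aux_herm_sub_smul hGG.1 hGGeig))) x
    rw [← heq] at hpsd
    simp only [sub_mulVec, smul_mulVec, one_mulVec, dotProduct_sub, dotProduct_smul,
      smul_eq_mul] at hpsd
    rw [hq2, hs]
    linarith
  have h4 : 0 ≤ q2 := aux_psd_nonneg (aux_psd_kron hM.posSemidef hGG.posSemidef) x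
  have h5 : 0 < s := aux_dot_self_pos hx
  -- use the hypothesis on ω
  have hmg : (0:ℝ) < mm * g := mul_pos hm hg0
  have hωm : 1 + c / (mm * g) ≤ ω * mm := by
    have hrw : (1 / mm) * (1 + c / (mm * g)) = (1 + c / (mm * g)) / mm := by ring
    rw [hrw, div_le_iff₀ hm] at hω
    exact hω
  have hω0 : 0 ≤ ω := by
    have hE : 0 ≤ 1 + c / (mm * g) := by
      have := div_nonneg hc0 hmg.le
      linarith
    have : 0 ≤ (1 / mm) * (1 + c / (mm * g)) :=
      mul_nonneg (by positivity) hE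
    linarith
  -- final chain
  have t1 : ω * mm * q2 ≤ ω * q3 := by
    have := mul_le_mul_of_nonneg_left h2 hω0
    rw [mul_assoc]
    exact this
  have t2 : (1 + c / (mm * g)) * q2 ≤ ω * mm * q2 := mul_le_mul_of_nonneg_right hωm h4
  have t3 : (c / (mm * g)) * (mm * g * s) ≤ (c / (mm * g)) * q2 :=
    mul_le_mul_of_nonneg_left h3 (div_nonneg hc0 hmg.le)
  have t4 : (c / (mm * g)) * (mm * g * s) = c * s := by
    field_simp
  nlinarith [t1, t2, t3, t4, h1]
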